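/- Let d = 2, h = 0, and let k : Z^2 → ℝ be symmetric with k(i) = 0 for |i| > 1, k(0) ≤ 0, k(e_1) < 0, k(e_2) < 0. Let μ^+ (resp. μ^−) be the infinite-volume Gibbs measure for the potential Φ obtained as weak limit of the finite-volume measures with + (resp. −) boundary conditions. Suppose β is large enough that μ^+ ≠ μ^−. Then μ^+ is not stationary for the infinite-volume PCA P: Pμ^+ ≠ μ^+. -/

import Mathlib

open MeasureTheory Filter

namespace PCA

noncomputable section

/-- Sites of the lattice `ℤ^d`. -/
abbrev Site (d : ℕ) := Fin d → ℤ

/-- Spin configurations on `ℤ^d` with spins in `{-1,1}` encoded by `Bool`. -/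
abbrev Conf (d : ℕ) := Site d → Bool

/-- The real value of a spin: `true ↦ 1`, `false ↦ -1`. -/
def val (b : Bool) : ℝ := if b then 1 else -1

/-- Squared Euclidean norm of a site. -/
def normSq {d : ℕ} (i : Site d) : ℤ := ∑ t, (i t) ^ 2

/-- The local field `Σ_j k(i-j) η_j`. -/
def field {d : ℕ} (k : Site d → ℝ) (i : Site d) (η : Conf d) : ℝ :=
  ∑' j : Site d, k (i - j) * val (η j)

/-- Single site updating probability
`p_i(s|η) = (1 + s tanh(β Σ_j k(i-j) η_j + β h))/2`. -/
def pval {d : ℕ} (β h : ℝ) (k : Site d → ℝ) (i : Site d) (s : Bool) (η : Conf d) : ℝ :=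
  (1 + val s * Real.tanh (β * field k i η + β * h)) / 2

/-- The configuration equal to `a` on `Λ` and to `τ` outside `Λ`. -/
def fill {d : ℕ} (Λ : Finset (Site d)) (a : ↥Λ → Bool) (τ : Conf d) : Conf d :=
  fun j => if h : j ∈ Λ then a ⟨j, h⟩ else τ j

/-- Finite volume PCA transition probability with boundary condition `τ`:
`P_Λ^τ(σ|η) = ∏_{i ∈ Λ} p_i(σ_i | η_Λ τ_{Λ^c})`. -/
def Pfin {d : ℕ} (β h : ℝ) (k : Site d → ℝ) (Λ : Finset (Site d)) (τ : Conf d)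
    (σ η : ↥Λ → Bool) : ℝ :=
  ∏ i : ↥Λ, pval β h k i.1 (σ i) (fill Λ η τ)

/-- The boundary field `Σ_{j ∈ Λ^c} k(i-j) τ_j`. -/
def outField {d : ℕ} (k : Site d → ℝ) (Λ : Finset (Site d)) (τ : Conf d) (i : Site d) : ℝ :=
  ∑' j : Site d, if j ∈ Λ then 0 else k (i - j) * val (τ j)

/-- Unnormalized stationary measure of the finite volume PCA:
`∏_{i∈Λ} e^{βhσ_i} cosh(β Σ_j k(i-j) σ̃_j + βh) e^{β σ_i Σ_{j∈Λ^c} k(i-j) τ_j}`. -/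
def nuNum {d : ℕ} (β h : ℝ) (k : Site d → ℝ) (Λ : Finset (Site d)) (τ : Conf d)
    (σ : ↥Λ → Bool) : ℝ :=
  ∏ i : ↥Λ,
    Real.exp (β * h * val (σ i))
      * Real.cosh (β * field k i.1 (fill Λ σ τ) + β * h)
      * Real.exp (β * val (σ i) * outField k Λ τ i.1)

/-- The normalized stationary measure `ν_Λ^τ`. -/
def nu {d : ℕ} (β h : ℝ) (k : Site d → ℝ) (Λ : Finset (Site d)) (τ : Conf d)
    (σ : ↥Λ → Bool) : ℝ :=
  nuNum β h k Λ τ σ / ∑ σ' : ↥Λ → Bool, nuNum β h k Λ τ σ'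


/-- The cylinder set of configurations agreeing with `a` on `Λ`. -/
def cylB {d : ℕ} (Λ : Finset (Site d)) (a : ↥Λ → Bool) : Set (Conf d) :=
  {σ : Conf d | ∀ j : ↥Λ, σ j.1 = a j}

/-- `P` is the (infinite volume) PCA kernel with single site probabilities `pval β h k`:
on every cylinder, `P(·|η)` is the product of the single site probabilities. -/
def IsPCAB {d : ℕ} (β h : ℝ) (k : Site d → ℝ)
    (P : ProbabilityTheory.Kernel (Conf d) (Conf d)) : Prop :=
  ∀ (η : Conf d) (Λ : Finset (Site d)) (a : ↥Λ → Bool),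
    P η (cylB Λ a) = ∏ j : ↥Λ, ENNReal.ofReal (pval β h k j.1 (a j) η)

/-- The Hamiltonian `H_Λ^τ(a) = Σ_{A ∩ Λ ≠ ∅} Φ_A(a_Λ τ_{Λ^c})` for the potential
`Φ_{{i}}(σ) = -βhσ_i`, `Φ_{U_i}(σ) = -log cosh(β Σ_j k(i-j)σ_j + βh)`,
`U_i = {j : k(i-j) ≠ 0}`, and `Φ_A = 0` otherwise. -/
def hamB {d : ℕ} (β h : ℝ) (k : Site d → ℝ) (Λ : Finset (Site d)) (a : ↥Λ → Bool)
    (τ : Conf d) : ℝ :=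
  (∑ i : ↥Λ, -(β * h * val (a i))) +
    ∑' i : Site d,
      Set.indicator {i : Site d | ∃ j ∈ Λ, k (i - j) ≠ 0}
        (fun i => -Real.log (Real.cosh (β * field k i (fill Λ a τ) + β * h))) i

/-- The finite volume Gibbs weight `μ_Λ^τ(a) = exp(-H_Λ^τ(a))/Z_Λ^τ`. -/
def gibbsWB {d : ℕ} (β h : ℝ) (k : Site d → ℝ) (Λ : Finset (Site d)) (a : ↥Λ → Bool)
    (τ : Conf d) : ℝ :=
  Real.exp (-hamB β h k Λ a τ) / ∑ b : ↥Λ → Bool, Real.exp (-hamB β h k Λ b τ)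

/-- The σ-algebra generated by the spins outside `Λ`. -/
def outer {d : ℕ} (Λ : Finset (Site d)) : MeasurableSpace (Conf d) :=
  MeasurableSpace.comap (fun σ (j : {j : Site d // j ∉ Λ}) => σ j.1) MeasurableSpace.pi

/-- `μ` is a Gibbs measure for the potential associated to `β`, `h`, `k` (DLR equations):
for every finite `Λ`, conditionally on the configuration outside `Λ`, the configuration
on `Λ` is distributed according to the finite volume Gibbs measure. -/
def IsGibbsB {d : ℕ} (β h : ℝ) (k : Site d → ℝ) (μ : Measure (Conf d)) : Prop :=
  ∀ (Λ : Finset (Site d)) (a : ↥Λ → Bool) (B : Set (Conf d)),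
    MeasurableSet[outer Λ] B →
    μ (cylB Λ a ∩ B) = ∫⁻ τ in B, ENNReal.ofReal (gibbsWB β h k Λ a τ) ∂μ

/-- First standard basis vector of `ℤ²`. -/
def e1 : Site 2 := ![1, 0]

/-- Second standard basis vector of `ℤ²`. -/
def e2 : Site 2 := ![0, 1]

/-- The centered hypercube `[-n,n]^d ∩ ℤ^d`. -/
def boxCc {d : ℕ} (n : ℕ) : Finset (Site d) :=
  Fintype.piFinset fun _ => Finset.Icc (-(n : ℤ)) (n : ℤ)

/-- A local function on configuration space: it depends on finitely many spins. -/
def LocalFun {d : ℕ} (f : Conf d → ℝ) : Prop :=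
  ∃ Δ : Finset (Site d), ∀ σ σ' : Conf d, (∀ j ∈ Δ, σ j = σ' j) → f σ = f σ'

/-- The finite volume Gibbs measure `μ_Λ^τ` (for `h = 0`) viewed as a probability measure
on the whole configuration space, extending configurations by `τ` outside `Λ`. -/
def gibbsMeas (β : ℝ) (k : Site 2 → ℝ) (Λ : Finset (Site 2)) (τ : Conf 2) :
    Measure (Conf 2) :=
  ∑ a : ↥Λ → Bool, ENNReal.ofReal (gibbsWB β 0 k Λ a τ) • Measure.dirac (fill Λ a τ)

/-! ### Section A : basic lemmas -/

lemma val_not (b : Bool) : val (!b) = - val b := by cases b <;> simp [val]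

lemma val_mono : Monotone val := by
  intro b b' h
  cases b
  · cases b' <;> norm_num [val]
  · have hb : true = b' := le_antisymm h (Bool.le_true b')
    rw [← hb]

lemma tanh_mono : Monotone Real.tanh := by
  intro x y h
  rw [Real.tanh_eq_sinh_div_cosh, Real.tanh_eq_sinh_div_cosh,
    div_le_div_iff₀ (Real.cosh_pos x) (Real.cosh_pos y)]
  nlinarith [Real.sinh_nonneg_iff.2 (sub_nonneg.2 h), Real.sinh_sub y x,
    Real.cosh_pos (x := x), Real.cosh_pos (x := y)]

lemma abs_tanh_le_one (x : ℝ) : |Real.tanh x| ≤ 1 := by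
  rw [Real.tanh_eq_sinh_div_cosh, abs_div, abs_of_pos (Real.cosh_pos (x := x)),
    div_le_one (Real.cosh_pos (x := x)), abs_le]
  have h1 := Real.cosh_sub_sinh x
  have h2 := Real.cosh_add_sinh x
  have h3 := Real.exp_pos x
  have h4 := Real.exp_pos (-x)
  constructor <;> nlinarith

/-- Two-point Karamata type inequality for `cosh`. -/
lemma cosh_mul_cosh_le {u1 u2 v1 v2 : ℝ} (hsum : u1 + u2 = v1 + v2) (h1 : v1 ≤ u2)
    (h2 : v2 ≤ u2) : Real.cosh v1 * Real.cosh v2 ≤ Real.cosh u1 * Real.cosh u2 := by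
  have e1 : 2 * (Real.cosh v1 * Real.cosh v2)
      = Real.cosh (v1 + v2) + Real.cosh (v1 - v2) := by
    rw [Real.cosh_add, Real.cosh_sub]; ring
  have e2 : 2 * (Real.cosh u1 * Real.cosh u2)
      = Real.cosh (u1 + u2) + Real.cosh (u1 - u2) := by
    rw [Real.cosh_add, Real.cosh_sub]; ring
  have habs : |v1 - v2| ≤ |u1 - u2| := by
    have hu : 0 ≤ u2 - u1 := by linarith
    rw [abs_sub_comm u1 u2, abs_of_nonneg hu, abs_le]
    constructor <;> linarith
  have hc := Real.cosh_le_cosh.2 habs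
  rw [hsum] at e2
  linarith

/-- The five-point neighborhood of the origin. -/
def V : Finset (Site 2) := {0, e1, -e1, e2, -e2}

lemma mem_V_of_normSq_le {x : Site 2} (h : normSq x ≤ 1) : x ∈ V := by
  have hx : x 0 ^ 2 + x 1 ^ 2 ≤ 1 := by
    simpa [normSq, Fin.sum_univ_two] using h
  have h00 : -1 ≤ x 0 ∧ x 0 ≤ 1 := by constructor <;> nlinarith [sq_nonneg (x 1)]
  have h11 : -1 ≤ x 1 ∧ x 1 ≤ 1 := by constructor <;> nlinarith [sq_nonneg (x 0)]
  have hxeq : ∀ (u : Site 2), x 0 = u 0 → x 1 = u 1 → x = u := by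
    intro u hu0 hu1; funext i; fin_cases i <;> assumption
  have hs0 : x 0 = -1 ∨ x 0 = 0 ∨ x 0 = 1 := by omega
  have hs1 : x 1 = -1 ∨ x 1 = 0 ∨ x 1 = 1 := by omega
  have c : (x 0 = 0 ∧ x 1 = 0) ∨ (x 0 = 1 ∧ x 1 = 0) ∨ (x 0 = -1 ∧ x 1 = 0)
      ∨ (x 0 = 0 ∧ x 1 = 1) ∨ (x 0 = 0 ∧ x 1 = -1) := by
    rcases hs0 with h'|h'|h' <;> rcases hs1 with h''|h''|h'' <;>
      rw [h', h''] at hx <;> norm_num at hx <;> omega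
  simp only [V, Finset.mem_insert, Finset.mem_singleton]
  rcases c with ⟨hA, hB⟩ | ⟨hA, hB⟩ | ⟨hA, hB⟩ | ⟨hA, hB⟩ | ⟨hA, hB⟩
  · exact Or.inl (hxeq 0 (by simpa using hA) (by simpa using hB))
  · exact Or.inr (Or.inl (hxeq e1 (by simpa [e1] using hA) (by simpa [e1] using hB)))
  · exact Or.inr (Or.inr (Or.inl
      (hxeq (-e1) (by simpa [e1] using hA) (by simpa [e1] using hB))))
  · exact Or.inr (Or.inr (Or.inr (Or.inl
      (hxeq e2 (by simpa [e2] using hA) (by simpa [e2] using hB)))))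
  · exact Or.inr (Or.inr (Or.inr (Or.inr
      (hxeq (-e2) (by simpa [e2] using hA) (by simpa [e2] using hB)))))
/-! ### Section B : the field and Hamiltonian, finite representations -/

open scoped Classical

variable {β : ℝ} {k : Site 2 → ℝ}

/-- The five-point neighborhood of a site. -/
def nbF (i : Site 2) : Finset (Site 2) := V.image (fun v => i - v)

lemma k_eq_zero (hrange : ∀ i : Site 2, (1 : ℝ) < (normSq i : ℝ) → k i = 0)
    {x : Site 2} (hx : x ∉ V) : k x = 0 := by
  apply hrange
  by_contra h
  push_neg at h
  exact hx (mem_V_of_normSq_le (by exact_mod_cast h))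

lemma k_nonpos (hsym : ∀ i : Site 2, k (-i) = k i)
    (hrange : ∀ i : Site 2, (1 : ℝ) < (normSq i : ℝ) → k i = 0)
    (hk0 : k 0 ≤ 0) (hk1 : k e1 < 0) (hk2 : k e2 < 0) : ∀ x, k x ≤ 0 := by
  intro x
  by_cases hx : x ∈ V
  · simp only [V, Finset.mem_insert, Finset.mem_singleton] at hx
    rcases hx with rfl | rfl | rfl | rfl | rfl
    · exact hk0
    · exact hk1.le
    · rw [hsym e1]; exact hk1.le
    · exact hk2.le
    · rw [hsym e2]; exact hk2.le
  · rw [k_eq_zero hrange hx]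

lemma field_eq_sum (hrange : ∀ i : Site 2, (1 : ℝ) < (normSq i : ℝ) → k i = 0)
    (i : Site 2) (η : Conf 2) :
    field k i η = ∑ j ∈ nbF i, k (i - j) * val (η j) := by
  apply tsum_eq_sum
  intro j hj
  have hV : i - j ∉ V := by
    intro hmem
    exact hj (Finset.mem_image.2 ⟨i - j, hmem, by ring⟩)
  rw [k_eq_zero hrange hV, zero_mul]

lemma field_antitone (hrange : ∀ i : Site 2, (1 : ℝ) < (normSq i : ℝ) → k i = 0)
    (hk : ∀ x, k x ≤ 0) (i : Site 2) {η η' : Conf 2} (h : η ≤ η') :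
    field k i η' ≤ field k i η := by
  rw [field_eq_sum hrange, field_eq_sum hrange]
  refine Finset.sum_le_sum fun j _ => ?_
  exact mul_le_mul_of_nonpos_left (val_mono (h j)) (hk _)

lemma field_flip (i : Site 2) (η : Conf 2) :
    field k i (fun j => !(η j)) = - field k i η := by
  unfold field
  rw [← tsum_neg]
  congr 1
  funext j
  rw [val_not]
  ring

lemma field_congr (hrange : ∀ i : Site 2, (1 : ℝ) < (normSq i : ℝ) → k i = 0)
    (i : Site 2) {η η' : Conf 2} (h : ∀ j ∈ nbF i, η j = η' j) :
    field k i η = field k i η' := by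
  rw [field_eq_sum hrange, field_eq_sum hrange]
  exact Finset.sum_congr rfl fun j hj => by rw [h j hj]

lemma field_four (hrange : ∀ i : Site 2, (1 : ℝ) < (normSq i : ℝ) → k i = 0)
    (i : Site 2) {σ1 σ2 σ3 σ4 : Conf 2}
    (h : ∀ j, val (σ1 j) + val (σ2 j) = val (σ3 j) + val (σ4 j)) :
    field k i σ1 + field k i σ2 = field k i σ3 + field k i σ4 := by
  simp only [field_eq_sum hrange, ← Finset.sum_add_distrib]
  refine Finset.sum_congr rfl fun j _ => ?_
  rw [← mul_add, ← mul_add, h j]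

/-- The finite set of sites where the Hamiltonian of `Λ` has nonzero terms. -/
def NN (Λ : Finset (Site 2)) : Finset (Site 2) := Λ.biUnion (fun j => V.image (fun v => j + v))

/-- The support set appearing in the Hamiltonian. -/
def SS (k : Site 2 → ℝ) (Λ : Finset (Site 2)) : Set (Site 2) := {i | ∃ j ∈ Λ, k (i - j) ≠ 0}

lemma SS_subset_NN (hrange : ∀ i : Site 2, (1 : ℝ) < (normSq i : ℝ) → k i = 0)
    {Λ : Finset (Site 2)} {i : Site 2} (hi : i ∈ SS k Λ) : i ∈ NN Λ := by
  obtain ⟨j, hj, hkj⟩ := hi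
  have hV : i - j ∈ V := by
    by_contra h
    exact hkj (k_eq_zero hrange h)
  exact Finset.mem_biUnion.2 ⟨j, hj, Finset.mem_image.2 ⟨i - j, hV, by ring⟩⟩

lemma NN_mono {Λ Λ' : Finset (Site 2)} (h : Λ ⊆ Λ') : NN Λ ⊆ NN Λ' :=
  Finset.biUnion_subset_biUnion_of_subset_left _ h

lemma SS_mono {Λ Λ' : Finset (Site 2)} (h : Λ ⊆ Λ') : SS k Λ ⊆ SS k Λ' := by
  rintro i ⟨j, hj, hkj⟩
  exact ⟨j, h hj, hkj⟩

lemma hamB_eq (hrange : ∀ i : Site 2, (1 : ℝ) < (normSq i : ℝ) → k i = 0)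
    (Λ : Finset (Site 2)) (a : ↥Λ → Bool) (τ : Conf 2) :
    hamB β 0 k Λ a τ = - ∑ i ∈ NN Λ,
      Set.indicator (SS k Λ)
        (fun i => Real.log (Real.cosh (β * field k i (fill Λ a τ)))) i := by
  unfold hamB
  have hset : {i : Site 2 | ∃ j ∈ Λ, k (i - j) ≠ 0} = SS k Λ := rfl
  rw [hset]
  rw [tsum_eq_sum (s := NN Λ) (fun i hi =>
    Set.indicator_of_notMem (fun hS => hi (SS_subset_NN hrange hS)) _)]
  simp only [mul_zero, zero_mul, add_zero, neg_zero, Finset.sum_const, smul_zero, zero_add]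
  rw [← Finset.sum_neg_distrib]
  refine Finset.sum_congr rfl fun i _ => ?_
  by_cases hS : i ∈ SS k Λ
  · rw [Set.indicator_of_mem hS, Set.indicator_of_mem hS]
  · rw [Set.indicator_of_notMem hS, Set.indicator_of_notMem hS, neg_zero]

/-- The unnormalized Gibbs weight. -/
def W (β : ℝ) (k : Site 2 → ℝ) (Λ : Finset (Site 2)) (a : ↥Λ → Bool) (τ : Conf 2) : ℝ :=
  Real.exp (-hamB β 0 k Λ a τ)

lemma W_pos {Λ : Finset (Site 2)} {a : ↥Λ → Bool} {τ : Conf 2} : 0 < W β k Λ a τ :=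
  Real.exp_pos _

lemma gibbsWB_eq_W (Λ : Finset (Site 2)) (a : ↥Λ → Bool) (τ : Conf 2) :
    gibbsWB β 0 k Λ a τ = W β k Λ a τ / ∑ b : ↥Λ → Bool, W β k Λ b τ := rfl

lemma W_eq_prod (hrange : ∀ i : Site 2, (1 : ℝ) < (normSq i : ℝ) → k i = 0)
    (Λ : Finset (Site 2)) (a : ↥Λ → Bool) (τ : Conf 2) :
    W β k Λ a τ = ∏ i ∈ NN Λ,
      (if i ∈ SS k Λ then Real.cosh (β * field k i (fill Λ a τ)) else 1) := by
  rw [W, hamB_eq hrange, neg_neg, Real.exp_sum]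
  refine Finset.prod_congr rfl fun i _ => ?_
  by_cases hS : i ∈ SS k Λ
  · rw [Set.indicator_of_mem hS, if_pos hS, Real.exp_log (Real.cosh_pos _)]
  · rw [Set.indicator_of_notMem hS, if_neg hS, Real.exp_zero]

lemma fill_mono {Λ : Finset (Site 2)} {a a' : ↥Λ → Bool} {τ τ' : Conf 2}
    (ha : a ≤ a') (hτ : τ ≤ τ') : fill Λ a τ ≤ fill Λ a' τ' := by
  intro j
  unfold fill
  by_cases h : j ∈ Λ
  · simpa [h] using ha ⟨j, h⟩
  · simpa [h] using hτ j

/-- The Holley condition for Gibbs weights. -/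
lemma W_cond (hβ : 0 ≤ β) (hrange : ∀ i : Site 2, (1 : ℝ) < (normSq i : ℝ) → k i = 0)
    (hk : ∀ x, k x ≤ 0) {Λ : Finset (Site 2)} {τ τ' : Conf 2} (hτ : τ ≤ τ')
    (a b : ↥Λ → Bool) :
    W β k Λ a τ * W β k Λ b τ' ≤ W β k Λ (a ⊓ b) τ * W β k Λ (a ⊔ b) τ' := by
  rw [W_eq_prod hrange, W_eq_prod hrange, W_eq_prod hrange, W_eq_prod hrange,
    ← Finset.prod_mul_distrib, ← Finset.prod_mul_distrib]
  refine Finset.prod_le_prod (fun i _ => ?_) (fun i _ => ?_)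
  · split_ifs <;> positivity
  · by_cases hS : i ∈ SS k Λ
    · simp only [if_pos hS]
      rw [mul_comm (Real.cosh (β * field k i (fill Λ (a ⊓ b) τ)))]
      apply cosh_mul_cosh_le
      · have h4 : ∀ j, val (fill Λ (a ⊔ b) τ' j) + val (fill Λ (a ⊓ b) τ j)
            = val (fill Λ a τ j) + val (fill Λ b τ' j) := by
          intro j
          unfold fill
          by_cases h : j ∈ Λ
          · simp only [dif_pos h, Pi.sup_apply, Pi.inf_apply]
            cases ha : a ⟨j, h⟩ <;> cases hb : b ⟨j, h⟩ <;> simp [val]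
          · simp only [dif_neg h]
            ring
        have := field_four (k := k) hrange i h4
        nlinarith [this]
      · apply mul_le_mul_of_nonneg_left _ hβ
        exact field_antitone hrange hk i (fill_mono inf_le_left le_rfl)
      · apply mul_le_mul_of_nonneg_left _ hβ
        exact field_antitone hrange hk i (fill_mono inf_le_right hτ)
    · simp only [if_neg hS, one_mul, le_refl]
/-! ### Section C : Holley inequality for the finite volume Gibbs measures -/

lemma gibbsWB_nonneg (Λ : Finset (Site 2)) (a : ↥Λ → Bool) (τ : Conf 2) :
    0 ≤ gibbsWB β 0 k Λ a τ := by
  rw [gibbsWB_eq_W]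
  have h1 : (0:ℝ) < W β k Λ a τ := W_pos
  have h2 : (0:ℝ) < ∑ b : ↥Λ → Bool, W β k Λ b τ :=
    Finset.sum_pos (fun _ _ => W_pos) Finset.univ_nonempty
  exact div_nonneg h1.le h2.le

lemma Zf_pos (Λ : Finset (Site 2)) (τ : Conf 2) :
    (0:ℝ) < ∑ b : ↥Λ → Bool, W (β := β) (k := k) Λ b τ :=
  Finset.sum_pos (fun _ _ => W_pos) Finset.univ_nonempty

lemma gibbsWB_sum_one (Λ : Finset (Site 2)) (τ : Conf 2) :
    ∑ a : ↥Λ → Bool, gibbsWB β 0 k Λ a τ = 1 := by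
  simp only [gibbsWB_eq_W (β := β) (k := k), ← Finset.sum_div]
  exact div_self (Zf_pos (β := β) (k := k) Λ τ).ne'

/-- Holley comparison between boundary conditions, on lattice functions. -/
lemma M1core (hβ0 : 0 ≤ β) (hrange : ∀ i : Site 2, (1 : ℝ) < (normSq i : ℝ) → k i = 0)
    (hk : ∀ x, k x ≤ 0) {Λ : Finset (Site 2)} {τ τ' : Conf 2} (hτ : τ ≤ τ')
    {g : (↥Λ → Bool) → ℝ} (hg0 : ∀ a, 0 ≤ g a) (hgm : Monotone g) :
    ∑ a : ↥Λ → Bool, gibbsWB β 0 k Λ a τ * g a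
      ≤ ∑ a : ↥Λ → Bool, gibbsWB β 0 k Λ a τ' * g a := by
  have key := four_functions_theorem_univ
      (fun a => W β k Λ a τ * g a) (fun a => W β k Λ a τ')
      (fun a => W β k Λ a τ) (fun a => W β k Λ a τ' * g a)
      (fun a => mul_nonneg W_pos.le (hg0 a)) (fun a => W_pos.le)
      (fun a => W_pos.le) (fun a => mul_nonneg W_pos.le (hg0 a))
      (fun a b => by
        calc (W β k Λ a τ * g a) * W β k Λ b τ'
            = (W β k Λ a τ * W β k Λ b τ') * g a := by ring
          _ ≤ (W β k Λ (a ⊓ b) τ * W β k Λ (a ⊔ b) τ') * g (a ⊔ b) := by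
              refine mul_le_mul (W_cond hβ0 hrange hk hτ a b) (hgm le_sup_left) (hg0 a) ?_
              exact mul_nonneg W_pos.le W_pos.le
          _ = W β k Λ (a ⊓ b) τ * (W β k Λ (a ⊔ b) τ' * g (a ⊔ b)) := by ring)
  have hZ : (0:ℝ) < ∑ b : ↥Λ → Bool, W β k Λ b τ := Zf_pos Λ τ
  have hZ' : (0:ℝ) < ∑ b : ↥Λ → Bool, W β k Λ b τ' := Zf_pos Λ τ'
  simp only [gibbsWB_eq_W (β := β) (k := k), div_mul_eq_mul_div, ← Finset.sum_div]
  rw [div_le_div_iff₀ hZ hZ']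
  calc (∑ a : ↥Λ → Bool, W β k Λ a τ * g a) * ∑ b : ↥Λ → Bool, W β k Λ b τ'
      ≤ (∑ a : ↥Λ → Bool, W β k Λ a τ) * ∑ a : ↥Λ → Bool, W β k Λ a τ' * g a := key
    _ = (∑ a : ↥Λ → Bool, W β k Λ a τ' * g a) * ∑ b : ↥Λ → Bool, W β k Λ b τ := by ring

/-- Expectation of an observable under the finite volume Gibbs measure. -/
def Ex (β : ℝ) (k : Site 2 → ℝ) (Λ : Finset (Site 2)) (τ : Conf 2) (G : Conf 2 → ℝ) : ℝ :=
  ∑ a : ↥Λ → Bool, gibbsWB β 0 k Λ a τ * G (fill Λ a τ)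

lemma fill_eq_on (Λ : Finset (Site 2)) (a : ↥Λ → Bool) (τ τ' : Conf 2) {j : Site 2}
    (hj : j ∈ Λ) : fill Λ a τ j = fill Λ a τ' j := by
  unfold fill
  rw [dif_pos hj, dif_pos hj]

/-- A `Δ`-local function evaluated on `fill Λ a τ` for `Δ ⊆ Λ` does not depend on `τ`. -/
lemma local_fill_eq {Δ Λ : Finset (Site 2)} (hΔ : Δ ⊆ Λ) {G : Conf 2 → ℝ}
    (hloc : ∀ σ σ' : Conf 2, (∀ j ∈ Δ, σ j = σ' j) → G σ = G σ')
    (a : ↥Λ → Bool) (τ τ' : Conf 2) : G (fill Λ a τ) = G (fill Λ a τ') :=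
  hloc _ _ fun j hj => fill_eq_on Λ a τ τ' (hΔ hj)

/-- Comparison of Gibbs expectations in the boundary condition. -/
lemma M1Ex (hβ0 : 0 ≤ β) (hrange : ∀ i : Site 2, (1 : ℝ) < (normSq i : ℝ) → k i = 0)
    (hk : ∀ x, k x ≤ 0) {Δ Λ : Finset (Site 2)} (hΔ : Δ ⊆ Λ) {τ τ' : Conf 2} (hτ : τ ≤ τ')
    {G : Conf 2 → ℝ} (hG0 : ∀ σ, 0 ≤ G σ) (hGm : Monotone G)
    (hloc : ∀ σ σ' : Conf 2, (∀ j ∈ Δ, σ j = σ' j) → G σ = G σ') :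
    Ex β k Λ τ G ≤ Ex β k Λ τ' G := by
  have h1 : ∀ (τ0 : Conf 2) (a : ↥Λ → Bool),
      G (fill Λ a τ0) = G (fill Λ a (fun _ => true)) :=
    fun τ0 a => local_fill_eq hΔ hloc a τ0 _
  unfold Ex
  calc ∑ a : ↥Λ → Bool, gibbsWB β 0 k Λ a τ * G (fill Λ a τ)
      = ∑ a : ↥Λ → Bool, gibbsWB β 0 k Λ a τ * G (fill Λ a (fun _ => true)) := by
        refine Finset.sum_congr rfl fun a _ => by rw [h1]
    _ ≤ ∑ a : ↥Λ → Bool, gibbsWB β 0 k Λ a τ' * G (fill Λ a (fun _ => true)) := by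
        refine M1core hβ0 hrange hk hτ (fun a => hG0 _) ?_
        intro a a' haa'
        exact hGm (fill_mono haa' le_rfl)
    _ = ∑ a : ↥Λ → Bool, gibbsWB β 0 k Λ a τ' * G (fill Λ a τ') := by
        refine Finset.sum_congr rfl fun a _ => ?_
        conv_rhs => rw [h1 τ' a]
/-! ### Section D : DLR decomposition and volume monotonicity -/

def merge (Λ Λ' : Finset (Site 2)) (hΛ : Λ ⊆ Λ') (a : ↥Λ → Bool) (t : ↥(Λ' \ Λ) → Bool) :
    ↥Λ' → Bool :=
  fun i => if h : i.1 ∈ Λ then a ⟨i.1, h⟩ else t ⟨i.1, Finset.mem_sdiff.2 ⟨i.2, h⟩⟩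

def splitEquiv {Λ Λ' : Finset (Site 2)} (hΛ : Λ ⊆ Λ') :
    ((↥Λ → Bool) × (↥(Λ' \ Λ) → Bool)) ≃ (↥Λ' → Bool) where
  toFun p := merge Λ Λ' hΛ p.1 p.2
  invFun a' := (fun i => a' ⟨i.1, hΛ i.2⟩, fun i => a' ⟨i.1, (Finset.mem_sdiff.1 i.2).1⟩)
  left_inv p := by
    obtain ⟨a, t⟩ := p
    refine Prod.ext ?_ ?_
    · funext i
      show merge Λ Λ' hΛ a t ⟨i.1, hΛ i.2⟩ = a i
      unfold merge
      rw [dif_pos i.2]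
    · funext i
      have hni : i.1 ∉ Λ := (Finset.mem_sdiff.1 i.2).2
      show merge Λ Λ' hΛ a t ⟨i.1, (Finset.mem_sdiff.1 i.2).1⟩ = t i
      unfold merge
      rw [dif_neg hni]
  right_inv a' := by
    funext i
    unfold merge
    by_cases h : i.1 ∈ Λ <;> simp [h]

/-- The boundary configuration obtained by extending the tail `t` by `τ`. -/
def tauT (Λ Λ' : Finset (Site 2)) (hΛ : Λ ⊆ Λ') (t : ↥(Λ' \ Λ) → Bool) (τ : Conf 2) :
    Conf 2 :=
  fill Λ' (merge Λ Λ' hΛ (fun _ => true) t) τ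

lemma fill_merge {Λ Λ' : Finset (Site 2)} (hΛ : Λ ⊆ Λ') (a : ↥Λ → Bool)
    (t : ↥(Λ' \ Λ) → Bool) (τ : Conf 2) :
    fill Λ' (merge Λ Λ' hΛ a t) τ = fill Λ a (tauT Λ Λ' hΛ t τ) := by
  funext j
  unfold tauT fill merge
  by_cases h : j ∈ Λ
  · have h' : j ∈ Λ' := hΛ h
    rw [dif_pos h', dif_pos h, dif_pos h]
  · rw [dif_neg h]
    by_cases h' : j ∈ Λ'
    · rw [dif_pos h', dif_pos h', dif_neg h, dif_neg h]
    · rw [dif_neg h', dif_neg h']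

lemma field_fill_eq_of_not_SS (hrange : ∀ i : Site 2, (1 : ℝ) < (normSq i : ℝ) → k i = 0)
    {Λ : Finset (Site 2)} {i : Site 2} (hi : i ∉ SS k Λ) (a b : ↥Λ → Bool) (τ : Conf 2) :
    field k i (fill Λ a τ) = field k i (fill Λ b τ) := by
  unfold field
  refine tsum_congr fun j => ?_
  by_cases hj : j ∈ Λ
  · have hz : k (i - j) = 0 := by
      by_contra h
      exact hi ⟨j, hj, h⟩
    rw [hz, zero_mul, zero_mul]
  · unfold fill
    rw [dif_neg hj, dif_neg hj]

lemma ham_swap (hrange : ∀ i : Site 2, (1 : ℝ) < (normSq i : ℝ) → k i = 0)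
    {Λ Λ' : Finset (Site 2)} (hΛ : Λ ⊆ Λ') (a : ↥Λ → Bool) (t : ↥(Λ' \ Λ) → Bool)
    (τ : Conf 2) :
    hamB β 0 k Λ' (merge Λ Λ' hΛ a t) τ
        + hamB β 0 k Λ (fun _ => true) (tauT Λ Λ' hΛ t τ)
      = hamB β 0 k Λ' (merge Λ Λ' hΛ (fun _ => true) t) τ
        + hamB β 0 k Λ a (tauT Λ Λ' hΛ t τ) := by
  have hNN := NN_mono hΛ
  have hvanish : ∀ (c : ↥Λ → Bool) (i : Site 2), i ∈ NN Λ' → i ∉ NN Λ →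
      Set.indicator (SS k Λ)
        (fun i => Real.log (Real.cosh (β * field k i (fill Λ c (tauT Λ Λ' hΛ t τ))))) i = 0 :=
    fun c i _ hi => Set.indicator_of_notMem (fun hS => hi (SS_subset_NN hrange hS)) _
  rw [hamB_eq hrange, hamB_eq hrange, hamB_eq hrange, hamB_eq hrange,
    fill_merge hΛ a t τ, fill_merge hΛ (fun _ => true) t τ,
    Finset.sum_subset hNN (hvanish (fun _ => true)), Finset.sum_subset hNN (hvanish a),
    ← neg_add, ← neg_add, ← Finset.sum_add_distrib, ← Finset.sum_add_distrib]
  refine congrArg Neg.neg (Finset.sum_congr rfl fun i _ => ?_)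
  by_cases hS : i ∈ SS k Λ
  · have hS' : i ∈ SS k Λ' := SS_mono hΛ hS
    rw [Set.indicator_of_mem hS', Set.indicator_of_mem hS,
      Set.indicator_of_mem hS', Set.indicator_of_mem hS]
    ring
  · have hfe : field k i (fill Λ a (tauT Λ Λ' hΛ t τ))
        = field k i (fill Λ (fun _ => true) (tauT Λ Λ' hΛ t τ)) :=
      field_fill_eq_of_not_SS hrange hS a (fun _ => true) _
    rw [Set.indicator_of_notMem hS, Set.indicator_of_notMem hS]
    by_cases hS' : i ∈ SS k Λ'
    · rw [Set.indicator_of_mem hS', Set.indicator_of_mem hS', hfe]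
    · rw [Set.indicator_of_notMem hS', Set.indicator_of_notMem hS']

lemma W_merge (hrange : ∀ i : Site 2, (1 : ℝ) < (normSq i : ℝ) → k i = 0)
    {Λ Λ' : Finset (Site 2)} (hΛ : Λ ⊆ Λ') (a : ↥Λ → Bool) (t : ↥(Λ' \ Λ) → Bool)
    (τ : Conf 2) :
    W β k Λ' (merge Λ Λ' hΛ a t) τ
      = Real.exp (-(hamB β 0 k Λ' (merge Λ Λ' hΛ (fun _ => true) t) τ
            - hamB β 0 k Λ (fun _ => true) (tauT Λ Λ' hΛ t τ)))
        * W β k Λ a (tauT Λ Λ' hΛ t τ) := by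
  unfold W
  rw [← Real.exp_add]
  congr 1
  have := ham_swap (β := β) hrange hΛ a t τ
  linarith

lemma Ex_eq_div (Λ : Finset (Site 2)) (τ : Conf 2) (G : Conf 2 → ℝ) :
    Ex β k Λ τ G = (∑ a : ↥Λ → Bool, W β k Λ a τ * G (fill Λ a τ))
      / (∑ a : ↥Λ → Bool, W β k Λ a τ) := by
  unfold Ex
  simp only [gibbsWB_eq_W (β := β) (k := k), div_mul_eq_mul_div, ← Finset.sum_div]

lemma sum_split {Λ Λ' : Finset (Site 2)} (hΛ : Λ ⊆ Λ') (f : (↥Λ' → Bool) → ℝ) :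
    (∑ a' : ↥Λ' → Bool, f a')
      = ∑ t : ↥(Λ' \ Λ) → Bool, ∑ a : ↥Λ → Bool, f (merge Λ Λ' hΛ a t) := by
  rw [← Equiv.sum_comp (splitEquiv hΛ) f, Fintype.sum_prod_type]
  rw [Finset.sum_comm]
  rfl

/-- Monotonicity in the volume, `+` boundary condition. -/
lemma M2top (hβ0 : 0 ≤ β) (hrange : ∀ i : Site 2, (1 : ℝ) < (normSq i : ℝ) → k i = 0)
    (hk : ∀ x, k x ≤ 0) {Δ Λ Λ' : Finset (Site 2)} (hΔ : Δ ⊆ Λ) (hΛ : Λ ⊆ Λ')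
    {G : Conf 2 → ℝ} (hG0 : ∀ σ, 0 ≤ G σ) (hGm : Monotone G)
    (hloc : ∀ σ σ' : Conf 2, (∀ j ∈ Δ, σ j = σ' j) → G σ = G σ') :
    Ex β k Λ' (fun _ => true) G ≤ Ex β k Λ (fun _ => true) G := by
  set τ : Conf 2 := (fun _ => true) with hτdef
  set R : (↥(Λ' \ Λ) → Bool) → ℝ := fun t =>
    Real.exp (-(hamB β 0 k Λ' (merge Λ Λ' hΛ (fun _ => true) t) τ
      - hamB β 0 k Λ (fun _ => true) (tauT Λ Λ' hΛ t τ))) with hRdef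
  have hR : ∀ t, (0:ℝ) < R t := fun t => Real.exp_pos _
  have hZ' : (0:ℝ) < ∑ a' : ↥Λ' → Bool, W β k Λ' a' τ := Zf_pos Λ' τ
  have hZt : ∀ t, (0:ℝ) < ∑ a : ↥Λ → Bool, W β k Λ a (tauT Λ Λ' hΛ t τ) :=
    fun t => Zf_pos Λ _
  have hτt_le : ∀ t, tauT Λ Λ' hΛ t τ ≤ τ := fun t j => Bool.le_true _
  have hnum : (∑ a' : ↥Λ' → Bool, W β k Λ' a' τ * G (fill Λ' a' τ))
      = ∑ t : ↥(Λ' \ Λ) → Bool, R t *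
          ∑ a : ↥Λ → Bool, W β k Λ a (tauT Λ Λ' hΛ t τ) * G (fill Λ a (tauT Λ Λ' hΛ t τ)) := by
    rw [sum_split hΛ]
    refine Finset.sum_congr rfl fun t _ => ?_
    rw [Finset.mul_sum]
    refine Finset.sum_congr rfl fun a _ => ?_
    rw [W_merge hrange hΛ, fill_merge hΛ]
    ring
  have hden : (∑ a' : ↥Λ' → Bool, W β k Λ' a' τ)
      = ∑ t : ↥(Λ' \ Λ) → Bool, R t * ∑ a : ↥Λ → Bool, W β k Λ a (tauT Λ Λ' hΛ t τ) := by
    rw [sum_split hΛ]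
    refine Finset.sum_congr rfl fun t _ => ?_
    rw [Finset.mul_sum]
    refine Finset.sum_congr rfl fun a _ => ?_
    rw [W_merge hrange hΛ]
  have hinner : ∀ t, (∑ a : ↥Λ → Bool, W β k Λ a (tauT Λ Λ' hΛ t τ)
        * G (fill Λ a (tauT Λ Λ' hΛ t τ)))
      ≤ (∑ a : ↥Λ → Bool, W β k Λ a (tauT Λ Λ' hΛ t τ)) * Ex β k Λ τ G := by
    intro t
    have hM1 : Ex β k Λ (tauT Λ Λ' hΛ t τ) G ≤ Ex β k Λ τ G :=
      M1Ex hβ0 hrange hk hΔ (hτt_le t) hG0 hGm hloc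
    have heq : (∑ a : ↥Λ → Bool, W β k Λ a (tauT Λ Λ' hΛ t τ)
          * G (fill Λ a (tauT Λ Λ' hΛ t τ)))
        = (∑ a : ↥Λ → Bool, W β k Λ a (tauT Λ Λ' hΛ t τ)) * Ex β k Λ (tauT Λ Λ' hΛ t τ) G := by
      rw [Ex_eq_div, mul_div_cancel₀ _ (hZt t).ne']
    rw [heq]
    exact mul_le_mul_of_nonneg_left hM1 (hZt t).le
  rw [Ex_eq_div (β := β) (k := k) Λ' τ G, div_le_iff₀ hZ', hnum, hden]
  calc (∑ t : ↥(Λ' \ Λ) → Bool, R t *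
          ∑ a : ↥Λ → Bool, W β k Λ a (tauT Λ Λ' hΛ t τ) * G (fill Λ a (tauT Λ Λ' hΛ t τ)))
      ≤ ∑ t : ↥(Λ' \ Λ) → Bool, R t *
          ((∑ a : ↥Λ → Bool, W β k Λ a (tauT Λ Λ' hΛ t τ)) * Ex β k Λ τ G) := by
        exact Finset.sum_le_sum fun t _ =>
          mul_le_mul_of_nonneg_left (hinner t) (hR t).le
    _ = Ex β k Λ τ G * ∑ t : ↥(Λ' \ Λ) → Bool,
          R t * ∑ a : ↥Λ → Bool, W β k Λ a (tauT Λ Λ' hΛ t τ) := by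
        rw [Finset.mul_sum]
        exact Finset.sum_congr rfl fun t _ => by ring
/-! ### Section E : spin flip symmetry -/

/-- Global spin flip. -/
def flipC (σ : Conf 2) : Conf 2 := fun j => !(σ j)

lemma flip_antitone {σ σ' : Conf 2} (h : σ ≤ σ') : flipC σ' ≤ flipC σ := by
  intro j
  have := h j
  revert this
  unfold flipC
  cases σ j <;> cases σ' j <;> intro h' <;> first | rfl | exact h' | exact (Bool.le_true _)

lemma fill_flip (Λ : Finset (Site 2)) (a : ↥Λ → Bool) (τ : Conf 2) :
    fill Λ (fun i => !(a i)) (flipC τ) = flipC (fill Λ a τ) := by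
  funext j
  by_cases h : j ∈ Λ <;> simp [fill, flipC, h]

lemma field_flipC (i : Site 2) (η : Conf 2) : field k i (flipC η) = - field k i η :=
  field_flip i η

lemma not_not_fun {Λ : Finset (Site 2)} (x : ↥Λ → Bool) : (fun i => !(!(x i))) = x := by
  funext i
  simp

lemma hamB_flip (Λ : Finset (Site 2)) (a : ↥Λ → Bool) (τ : Conf 2) :
    hamB β 0 k Λ (fun i => !(a i)) (flipC τ) = hamB β 0 k Λ a τ := by
  unfold hamB
  refine congrArg₂ (· + ·) ?_ ?_
  · simp
  · refine tsum_congr fun i => ?_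
    by_cases hS : i ∈ {i : Site 2 | ∃ j ∈ Λ, k (i - j) ≠ 0}
    · rw [Set.indicator_of_mem hS, Set.indicator_of_mem hS, fill_flip, field_flipC]
      rw [show β * -field k i (fill Λ a τ) + β * 0 = -(β * field k i (fill Λ a τ) + β * 0) by ring,
        Real.cosh_neg]
    · rw [Set.indicator_of_notMem hS, Set.indicator_of_notMem hS]

/-- The spin flip as an equivalence of local configurations. -/
def notEquiv (Λ : Finset (Site 2)) : (↥Λ → Bool) ≃ (↥Λ → Bool) where
  toFun a := fun i => !(a i)
  invFun a := fun i => !(a i)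
  left_inv a := by funext i; simp
  right_inv a := by funext i; simp

lemma W_flip (Λ : Finset (Site 2)) (a : ↥Λ → Bool) (τ : Conf 2) :
    W β k Λ (fun i => !(a i)) (flipC τ) = W β k Λ a τ := by
  unfold W
  rw [hamB_flip]

lemma Zf_flip (Λ : Finset (Site 2)) (τ : Conf 2) :
    (∑ b : ↥Λ → Bool, W β k Λ b (flipC τ)) = ∑ b : ↥Λ → Bool, W β k Λ b τ := by
  refine Fintype.sum_equiv (notEquiv Λ) _ _ fun x => ?_
  have he : (notEquiv Λ) x = fun i => !(x i) := rfl
  rw [he, ← W_flip (β := β) (k := k) Λ (fun i => !(x i)) τ, not_not_fun]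

lemma gibbsWB_flip (Λ : Finset (Site 2)) (a : ↥Λ → Bool) (τ : Conf 2) :
    gibbsWB β 0 k Λ (fun i => !(a i)) (flipC τ) = gibbsWB β 0 k Λ a τ := by
  rw [gibbsWB_eq_W, gibbsWB_eq_W, W_flip, Zf_flip]

lemma Ex_flip (Λ : Finset (Site 2)) (τ : Conf 2) (G : Conf 2 → ℝ) :
    Ex β k Λ (flipC τ) G = Ex β k Λ τ (fun σ => G (flipC σ)) := by
  unfold Ex
  refine Fintype.sum_equiv (notEquiv Λ) _ _ fun x => ?_
  have he : (notEquiv Λ) x = fun i => !(x i) := rfl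
  show gibbsWB β 0 k Λ x (flipC τ) * G (fill Λ x (flipC τ))
      = gibbsWB β 0 k Λ ((notEquiv Λ) x) τ * G (flipC (fill Λ ((notEquiv Λ) x) τ))
  rw [he, ← gibbsWB_flip (β := β) (k := k) Λ (fun i => !(x i)) τ,
    ← fill_flip Λ (fun i => !(x i)) τ, not_not_fun]

lemma Ex_one_sub (Λ : Finset (Site 2)) (τ : Conf 2) (G : Conf 2 → ℝ) :
    Ex β k Λ τ (fun σ => 1 - G σ) = 1 - Ex β k Λ τ G := by
  unfold Ex
  have h : ∀ a : ↥Λ → Bool, gibbsWB β 0 k Λ a τ * (1 - G (fill Λ a τ))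
      = gibbsWB β 0 k Λ a τ - gibbsWB β 0 k Λ a τ * G (fill Λ a τ) := fun a => by ring
  rw [Finset.sum_congr rfl fun a _ => h a, Finset.sum_sub_distrib,
    gibbsWB_sum_one (β := β) (k := k) Λ τ]

/-- Monotonicity in the volume, `-` boundary condition. -/
lemma M2bot (hβ0 : 0 ≤ β) (hrange : ∀ i : Site 2, (1 : ℝ) < (normSq i : ℝ) → k i = 0)
    (hk : ∀ x, k x ≤ 0) {Δ Λ Λ' : Finset (Site 2)} (hΔ : Δ ⊆ Λ) (hΛ : Λ ⊆ Λ')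
    {G : Conf 2 → ℝ} (hG0 : ∀ σ, 0 ≤ G σ) (hG1 : ∀ σ, G σ ≤ 1) (hGm : Monotone G)
    (hloc : ∀ σ σ' : Conf 2, (∀ j ∈ Δ, σ j = σ' j) → G σ = G σ') :
    Ex β k Λ (fun _ => false) G ≤ Ex β k Λ' (fun _ => false) G := by
  have hbot : (fun _ => false : Conf 2) = flipC (fun _ => true) := rfl
  rw [hbot, Ex_flip, Ex_flip]
  have h2 := M2top (β := β) (k := k) (G := fun σ => 1 - G (flipC σ)) hβ0 hrange hk hΔ hΛ
      (fun σ => by have := hG1 (flipC σ); linarith)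
      (fun σ σ' hσ => by
        have := hGm (flip_antitone hσ)
        simp only
        linarith)
      (fun σ σ' hσ => by
        have hGG : G (flipC σ) = G (flipC σ') :=
          hloc _ _ (fun j hj => by unfold flipC; rw [hσ j hj])
        simp only [hGG])
  rw [Ex_one_sub, Ex_one_sub] at h2
  linarith
/-! ### Section F : measure theoretic toolkit -/

lemma measurable_local {Δ : Finset (Site 2)} {G : Conf 2 → ℝ}
    (hloc : ∀ σ σ' : Conf 2, (∀ j ∈ Δ, σ j = σ' j) → G σ = G σ') : Measurable G := by
  have hG : G = (fun b : ↥Δ → Bool => G (fill Δ b (fun _ => true)))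
      ∘ (fun σ (j : ↥Δ) => σ j.1) := by
    funext σ
    exact hloc σ _ (fun j hj => by unfold fill; rw [dif_pos hj])
  rw [hG]
  exact (measurable_of_countable _).comp (measurable_pi_lambda _ fun j => measurable_pi_apply _)

lemma integrable_bdd {G : Conf 2 → ℝ} (hG : Measurable G) (C : ℝ) (hC : ∀ σ, |G σ| ≤ C)
    (μ : Measure (Conf 2)) [IsFiniteMeasure μ] : Integrable G μ := by
  refine Integrable.mono' (integrable_const C) hG.aestronglyMeasurable ?_
  exact Filter.Eventually.of_forall fun σ => hC σ

lemma integral_gibbsMeas (Λ : Finset (Site 2)) (τ : Conf 2) {G : Conf 2 → ℝ}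
    (hG : Measurable G) :
    ∫ σ, G σ ∂(gibbsMeas β k Λ τ) = Ex β k Λ τ G := by
  unfold gibbsMeas Ex
  rw [MeasureTheory.integral_finset_sum_measure (fun a _ => ?_)]
  · refine Finset.sum_congr rfl fun a _ => ?_
    rw [MeasureTheory.integral_smul_measure,
      MeasureTheory.integral_dirac' _ _ hG.stronglyMeasurable,
      ENNReal.toReal_ofReal (gibbsWB_nonneg (β := β) (k := k) Λ a τ), smul_eq_mul]
  · refine Integrable.smul_measure ?_ ENNReal.ofReal_ne_top
    constructor
    · exact hG.aestronglyMeasurable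
    · rw [MeasureTheory.hasFiniteIntegral_iff_norm,
        MeasureTheory.lintegral_dirac' _ (by fun_prop)]
      exact ENNReal.ofReal_lt_top

lemma boxCc_mono {m n : ℕ} (h : m ≤ n) : (boxCc m : Finset (Site 2)) ⊆ boxCc n := by
  intro x hx
  rw [boxCc, Fintype.mem_piFinset] at hx ⊢
  intro t
  have := hx t
  rw [Finset.mem_Icc] at this ⊢
  omega

lemma mem_Icc_of_natAbs_le (N : ℕ) (z : ℤ) (hz : z.natAbs ≤ N) :
    z ∈ Finset.Icc (-(N:ℤ)) (N:ℤ) := by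
  rw [Finset.mem_Icc]
  omega

lemma exists_boxCc (Δ : Finset (Site 2)) : ∃ N : ℕ, Δ ⊆ boxCc N := by
  classical
  refine ⟨Δ.sup (fun j => max (j 0).natAbs (j 1).natAbs), fun j hj => ?_⟩
  rw [boxCc, Fintype.mem_piFinset]
  have h2 : max (j 0).natAbs (j 1).natAbs ≤ Δ.sup (fun j => max (j 0).natAbs (j 1).natAbs) :=
    Finset.le_sup (f := fun j : Site 2 => max (j 0).natAbs (j 1).natAbs) hj
  intro t
  have h3 : (j t).natAbs ≤ max (j 0).natAbs (j 1).natAbs := by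
    fin_cases t
    · exact le_max_left _ _
    · exact le_max_right _ _
  exact mem_Icc_of_natAbs_le _ _ (h3.trans h2)

/-- The monomial observable `∏_{j ∈ T} 1{σ_j = +}`. -/
def monoF (T : Finset (Site 2)) : Conf 2 → ℝ := fun σ => ∏ j ∈ T, (if σ j then (1:ℝ) else 0)

lemma monoF_nonneg (T : Finset (Site 2)) (σ : Conf 2) : 0 ≤ monoF T σ :=
  Finset.prod_nonneg fun j _ => by split <;> norm_num

lemma monoF_le_one (T : Finset (Site 2)) (σ : Conf 2) : monoF T σ ≤ 1 :=
  Finset.prod_le_one (fun j _ => by split <;> norm_num) (fun j _ => by split <;> norm_num)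

lemma monoF_mono (T : Finset (Site 2)) : Monotone (monoF T) := by
  intro σ σ' h
  refine Finset.prod_le_prod (fun j _ => by split <;> norm_num) (fun j _ => ?_)
  have hj := h j
  cases hσ : σ j
  · have h0 : (if false = true then (1:ℝ) else 0) = 0 := by norm_num
    rw [h0]
    split <;> norm_num
  · rw [hσ] at hj
    have h2 : σ' j = true := le_antisymm (Bool.le_true _) hj
    rw [h2]

lemma monoF_local (T : Finset (Site 2)) :
    ∀ σ σ' : Conf 2, (∀ j ∈ T, σ j = σ' j) → monoF T σ = monoF T σ' := by
  intro σ σ' h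
  exact Finset.prod_congr rfl fun j hj => by rw [h j hj]

lemma measurable_monoF (T : Finset (Site 2)) : Measurable (monoF T) :=
  measurable_local (monoF_local T)

lemma measurableSet_cylB (Λ : Finset (Site 2)) (a : ↥Λ → Bool) :
    MeasurableSet (cylB Λ a) := by
  have : cylB Λ a = ⋂ j : ↥Λ, (fun σ : Conf 2 => σ j.1) ⁻¹' {a j} := by
    ext σ
    simp [cylB, Set.mem_iInter]
  rw [this]
  exact MeasurableSet.iInter fun j => (measurable_pi_apply _) (measurableSet_singleton _)

lemma monoF_eq_indicator (T : Finset (Site 2)) :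
    monoF T = Set.indicator (cylB T (fun _ => true)) (fun _ => (1:ℝ)) := by
  funext σ
  by_cases h : σ ∈ cylB T (fun _ => true)
  · rw [Set.indicator_of_mem h]
    refine Finset.prod_eq_one fun j hj => ?_
    rw [h ⟨j, hj⟩]
    simp
  · rw [Set.indicator_of_notMem h]
    have : ∃ j ∈ T, σ j = false := by
      by_contra hc
      push_neg at hc
      exact h fun j => by
        have := hc j.1 j.2
        cases hσ : σ j.1
        · exact absurd hσ this
        · rfl
    obtain ⟨j, hj, hfalse⟩ := this
    exact Finset.prod_eq_zero hj (by rw [hfalse]; simp)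

lemma integral_monoF (μ : Measure (Conf 2)) [IsProbabilityMeasure μ] (T : Finset (Site 2)) :
    ∫ σ, monoF T σ ∂μ = (μ (cylB T (fun _ => true))).toReal := by
  rw [monoF_eq_indicator, MeasureTheory.integral_indicator_const _ (measurableSet_cylB _ _)]
  simp
  rfl

/-- The collection of cylinder sets. -/
def cylSets : Set (Set (Conf 2)) :=
  {s | ∃ (Λ : Finset (Site 2)) (a : ↥Λ → Bool), s = cylB Λ a}

lemma isPiSystem_cylSets : IsPiSystem cylSets := by
  rintro s ⟨Λ, a, rfl⟩ t ⟨Λ', a', rfl⟩ hne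
  obtain ⟨σ0, hσ1, hσ2⟩ := hne
  refine ⟨Λ ∪ Λ', fun j => σ0 j.1, ?_⟩
  ext σ
  simp only [cylB, Set.mem_inter_iff, Set.mem_setOf_eq]
  constructor
  · rintro ⟨h1, h2⟩ j
    rcases Finset.mem_union.1 j.2 with hj | hj
    · rw [show σ j.1 = σ ((⟨j.1, hj⟩ : ↥Λ) : Site 2) from rfl, h1 ⟨j.1, hj⟩]
      exact (hσ1 ⟨j.1, hj⟩).symm
    · rw [show σ j.1 = σ ((⟨j.1, hj⟩ : ↥Λ') : Site 2) from rfl, h2 ⟨j.1, hj⟩]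
      exact (hσ2 ⟨j.1, hj⟩).symm
  · intro h
    constructor
    · intro j
      rw [show σ j.1 = σ ((⟨j.1, Finset.mem_union_left _ j.2⟩ : ↥(Λ ∪ Λ')) : Site 2) from rfl,
        h ⟨j.1, Finset.mem_union_left _ j.2⟩]
      exact hσ1 j
    · intro j
      rw [show σ j.1 = σ ((⟨j.1, Finset.mem_union_right _ j.2⟩ : ↥(Λ ∪ Λ')) : Site 2) from rfl,
        h ⟨j.1, Finset.mem_union_right _ j.2⟩]
      exact hσ2 j

lemma cylB_singleton (j : Site 2) (b : Bool) :
    cylB ({j} : Finset (Site 2)) (fun _ => b) = (fun σ : Conf 2 => σ j) ⁻¹' {b} := by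
  ext σ
  simp only [cylB, Set.mem_setOf_eq, Set.mem_preimage, Set.mem_singleton_iff]
  constructor
  · intro h
    exact h ⟨j, Finset.mem_singleton_self j⟩
  · intro h i
    have : i.1 = j := Finset.mem_singleton.1 i.2
    rw [show σ i.1 = σ j by rw [this]]
    exact h

lemma generateFrom_cylSets :
    (inferInstance : MeasurableSpace (Conf 2)) = MeasurableSpace.generateFrom cylSets := by
  refine le_antisymm ?_ (MeasurableSpace.generateFrom_le ?_)
  · refine iSup_le fun j => ?_
    intro s hs
    obtain ⟨t, -, rfl⟩ := hs
    have key : ∀ t : Set Bool,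
        MeasurableSet[MeasurableSpace.generateFrom cylSets] ((fun σ : Conf 2 => σ j) ⁻¹' t) := by
      intro t
      by_cases h1 : true ∈ t <;> by_cases h2 : false ∈ t
      · have : (fun σ : Conf 2 => σ j) ⁻¹' t = Set.univ := by
          ext σ
          simp only [Set.mem_preimage, Set.mem_univ, iff_true]
          cases σ j
          · exact h2
          · exact h1
        rw [this]
        exact @MeasurableSet.univ _ (MeasurableSpace.generateFrom cylSets)
      · have : (fun σ : Conf 2 => σ j) ⁻¹' t = (fun σ : Conf 2 => σ j) ⁻¹' {true} := by
          ext σ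
          simp only [Set.mem_preimage, Set.mem_singleton_iff]
          cases σ j <;> simp [h1, h2]
        rw [this, ← cylB_singleton]
        exact MeasurableSpace.measurableSet_generateFrom ⟨{j}, fun _ => true, rfl⟩
      · have : (fun σ : Conf 2 => σ j) ⁻¹' t = (fun σ : Conf 2 => σ j) ⁻¹' {false} := by
          ext σ
          simp only [Set.mem_preimage, Set.mem_singleton_iff]
          cases σ j <;> simp [h1, h2]
        rw [this, ← cylB_singleton]
        exact MeasurableSpace.measurableSet_generateFrom ⟨{j}, fun _ => false, rfl⟩
      · have : (fun σ : Conf 2 => σ j) ⁻¹' t = ∅ := by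
          ext σ
          simp only [Set.mem_preimage, Set.mem_empty_iff_false, iff_false]
          cases hσ : σ j
          · exact h2
          · exact h1
        rw [this]
        exact @MeasurableSet.empty _ (MeasurableSpace.generateFrom cylSets)
    exact key t
  · rintro s ⟨Λ, a, rfl⟩
    exact measurableSet_cylB Λ a
/-! ### Section G : probability measures are determined by monomial moments -/

lemma indicator_cyl_expand (Λ : Finset (Site 2)) (a : ↥Λ → Bool) (σ : Conf 2) :
    Set.indicator (cylB Λ a) (fun _ => (1:ℝ)) σ
      = ∑ U ∈ Λ.powerset,
          ((∏ j ∈ U, (if (fill Λ a (fun _ => true)) j then (0:ℝ) else 1))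
            * ∏ j ∈ Λ \ U, (if (fill Λ a (fun _ => true)) j then (1:ℝ) else -1))
            * monoF (Λ \ U) σ := by
  set ab : Conf 2 := fill Λ a (fun _ => true) with hab
  have step1 : Set.indicator (cylB Λ a) (fun _ => (1:ℝ)) σ
      = ∏ j ∈ Λ, ((if ab j then (0:ℝ) else 1)
          + (if ab j then (1:ℝ) else -1) * (if σ j then 1 else 0)) := by
    have hval : ∀ j ∈ Λ, ((if ab j then (0:ℝ) else 1)
        + (if ab j then (1:ℝ) else -1) * (if σ j then 1 else 0))
        = if σ j = ab j then 1 else 0 := by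
      intro j hj
      cases hA : ab j <;> cases hS : σ j <;> norm_num
    rw [Finset.prod_congr rfl hval]
    by_cases h : σ ∈ cylB Λ a
    · rw [Set.indicator_of_mem h]
      refine (Finset.prod_eq_one fun j hj => ?_).symm
      have h1 : σ j = a ⟨j, hj⟩ := h ⟨j, hj⟩
      have h2 : ab j = a ⟨j, hj⟩ := by rw [hab]; unfold fill; rw [dif_pos hj]
      rw [h1, h2]
      simp
    · rw [Set.indicator_of_notMem h]
      have : ∃ j ∈ Λ, σ j ≠ ab j := by
        by_contra hc
        push_neg at hc
        refine h fun j => ?_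
        have h2 : ab j.1 = a j := by
          rw [hab]; unfold fill; rw [dif_pos j.2]
        rw [← h2]
        exact hc j.1 j.2
      obtain ⟨j, hj, hne⟩ := this
      exact (Finset.prod_eq_zero hj (by rw [if_neg hne])).symm
  rw [step1, Finset.prod_add]
  refine Finset.sum_congr rfl fun U hU => ?_
  rw [Finset.prod_mul_distrib]
  unfold monoF
  ring

lemma integrable_monoF (μ : Measure (Conf 2)) [IsFiniteMeasure μ] (T : Finset (Site 2)) :
    Integrable (monoF T) μ := by
  refine integrable_bdd (measurable_monoF T) 1 (fun σ => ?_) μ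
  rw [abs_of_nonneg (monoF_nonneg T σ)]
  exact monoF_le_one T σ

lemma measure_cyl_eq_of_mono (μ ν : Measure (Conf 2)) [IsProbabilityMeasure μ]
    [IsProbabilityMeasure ν]
    (h : ∀ T : Finset (Site 2), ∫ σ, monoF T σ ∂μ = ∫ σ, monoF T σ ∂ν)
    (Λ : Finset (Site 2)) (a : ↥Λ → Bool) : μ (cylB Λ a) = ν (cylB Λ a) := by
  have key : ∀ (ρ : Measure (Conf 2)) [IsProbabilityMeasure ρ],
      (ρ (cylB Λ a)).toReal = ∑ U ∈ Λ.powerset,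
        ((∏ j ∈ U, (if (fill Λ a (fun _ => true)) j then (0:ℝ) else 1))
          * ∏ j ∈ Λ \ U, (if (fill Λ a (fun _ => true)) j then (1:ℝ) else -1))
          * ∫ σ, monoF (Λ \ U) σ ∂ρ := by
    intro ρ hρ
    have h1 : (ρ (cylB Λ a)).toReal
        = ∫ σ, Set.indicator (cylB Λ a) (fun _ => (1:ℝ)) σ ∂ρ := by
      rw [MeasureTheory.integral_indicator_const _ (measurableSet_cylB Λ a)]
      simp
      rfl
    rw [h1]
    rw [MeasureTheory.integral_congr_ae
      (Filter.EventuallyEq.of_eq (funext (indicator_cyl_expand Λ a)))]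
    rw [MeasureTheory.integral_finset_sum _
      (fun U _ => ((integrable_monoF ρ (Λ \ U)).const_mul _))]
    exact Finset.sum_congr rfl fun U _ => MeasureTheory.integral_const_mul _ _
  have hteq : (μ (cylB Λ a)).toReal = (ν (cylB Λ a)).toReal := by
    rw [key μ, key ν]
    exact Finset.sum_congr rfl fun U _ => by rw [h (Λ \ U)]
  exact (ENNReal.toReal_eq_toReal_iff' (measure_ne_top μ _) (measure_ne_top ν _)).1 hteq

lemma measure_eq_of_mono (μ ν : Measure (Conf 2)) [IsProbabilityMeasure μ]
    [IsProbabilityMeasure ν]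
    (h : ∀ T : Finset (Site 2), ∫ σ, monoF T σ ∂μ = ∫ σ, monoF T σ ∂ν) : μ = ν := by
  refine ext_of_generate_finite cylSets generateFrom_cylSets isPiSystem_cylSets ?_ ?_
  · rintro s ⟨Λ, a, rfl⟩
    exact measure_cyl_eq_of_mono μ ν h Λ a
  · simp
/-! ### Section H : PCA kernel lemmas -/

lemma pval_bounds (i : Site 2) (s : Bool) (η : Conf 2) :
    0 ≤ pval β 0 k i s η ∧ pval β 0 k i s η ≤ 1 := by
  unfold pval
  have h1 := abs_tanh_le_one (β * field k i η + β * 0)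
  have h2 : |val s| = 1 := by cases s <;> simp [val]
  have h3 : |val s * Real.tanh (β * field k i η + β * 0)| ≤ 1 := by
    rw [abs_mul, h2, one_mul]
    exact h1
  rw [abs_le] at h3
  constructor <;> [linarith; linarith]

/-- The one-step probability of seeing all `+` on `T`. -/
def qfun (β : ℝ) (k : Site 2 → ℝ) (T : Finset (Site 2)) : Conf 2 → ℝ :=
  fun η => ∏ j ∈ T, pval β 0 k j true η

lemma qfun_nonneg (T : Finset (Site 2)) (η : Conf 2) : 0 ≤ qfun β k T η :=
  Finset.prod_nonneg fun j _ => (pval_bounds j true η).1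

lemma qfun_le_one (T : Finset (Site 2)) (η : Conf 2) : qfun β k T η ≤ 1 :=
  Finset.prod_le_one (fun j _ => (pval_bounds j true η).1)
    (fun j _ => (pval_bounds j true η).2)

lemma qfun_local (hrange : ∀ i : Site 2, (1 : ℝ) < (normSq i : ℝ) → k i = 0)
    (T : Finset (Site 2)) : ∀ η η' : Conf 2,
    (∀ j ∈ T.biUnion nbF, η j = η' j) → qfun β k T η = qfun β k T η' := by
  intro η η' h
  refine Finset.prod_congr rfl fun j hj => ?_
  unfold pval
  rw [field_congr hrange j (fun i hi => h i (Finset.mem_biUnion.2 ⟨j, hj, hi⟩))]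

lemma qfun_anti (hβ0 : 0 ≤ β) (hrange : ∀ i : Site 2, (1 : ℝ) < (normSq i : ℝ) → k i = 0)
    (hk : ∀ x, k x ≤ 0) (T : Finset (Site 2)) {η η' : Conf 2} (h : η ≤ η') :
    qfun β k T η' ≤ qfun β k T η := by
  refine Finset.prod_le_prod (fun j _ => (pval_bounds j true η').1) (fun j _ => ?_)
  unfold pval
  have hf : field k j η' ≤ field k j η := field_antitone hrange hk j h
  have ht : Real.tanh (β * field k j η' + β * 0)
      ≤ Real.tanh (β * field k j η + β * 0) := by
    apply tanh_mono
    have := mul_le_mul_of_nonneg_left hf hβ0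
    linarith
  rw [show val true = (1:ℝ) from rfl, one_mul, one_mul]
  linarith

lemma measurable_qfun (hrange : ∀ i : Site 2, (1 : ℝ) < (normSq i : ℝ) → k i = 0)
    (T : Finset (Site 2)) : Measurable (qfun β k T) :=
  measurable_local (qfun_local hrange T)

lemma measurable_flipC : Measurable flipC :=
  measurable_pi_lambda _ fun j =>
    (measurable_of_countable (fun b : Bool => !b)).comp (measurable_pi_apply j)

lemma flip_preimage_cyl (Λ : Finset (Site 2)) (a : ↥Λ → Bool) :
    flipC ⁻¹' (cylB Λ a) = cylB Λ (fun j => !(a j)) := by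
  ext σ
  simp only [cylB, Set.mem_preimage, Set.mem_setOf_eq]
  constructor <;> intro h j <;> have hh := h j <;>
    cases hσ : σ j.1 <;> cases hA : a j <;> simp_all [flipC]

lemma pval_flip (i : Site 2) (s : Bool) (η : Conf 2) :
    pval β 0 k i s (flipC η) = pval β 0 k i (!s) η := by
  unfold pval
  rw [field_flipC,
    show β * -field k i η + β * 0 = -(β * field k i η + β * 0) by ring,
    Real.tanh_neg, val_not]
  ring
/-! ### Section I : PCA kernel, flip conjugation, stationarity -/

lemma subseq_limit_eq {u : ℕ → ℝ} {N : ℕ}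
    (hmono : ∀ m n, N ≤ m → m ≤ n → u m ≤ u n)
    {φ ψ : ℕ → ℕ} (hφ : StrictMono φ) (hψ : StrictMono ψ) {x y : ℝ}
    (hx : Tendsto (fun n => u (φ n)) atTop (nhds x))
    (hy : Tendsto (fun n => u (ψ n)) atTop (nhds y)) : x = y := by
  have key : ∀ (φ' ψ' : ℕ → ℕ), StrictMono φ' → StrictMono ψ' → ∀ (x' y' : ℝ),
      Tendsto (fun n => u (φ' n)) atTop (nhds x') →
      Tendsto (fun n => u (ψ' n)) atTop (nhds y') → x' ≤ y' := by
    intro φ' ψ' hφ' hψ' x' y' hx' hy'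
    have hub : ∀ m, N ≤ m → u (φ' m) ≤ y' := by
      intro m hm
      refine ge_of_tendsto hy' ?_
      rw [eventually_atTop]
      exact ⟨φ' m, fun n hn =>
        hmono (φ' m) (ψ' n) (le_trans hm hφ'.le_apply) (le_trans hn hψ'.le_apply)⟩
    refine le_of_tendsto hx' ?_
    rw [eventually_atTop]
    exact ⟨N, fun m hm => hub m hm⟩
  exact le_antisymm (key φ ψ hφ hψ x y hx hy) (key ψ φ hψ hφ y x hy hx)

variable {P : ProbabilityTheory.Kernel (Conf 2) (Conf 2)}

lemma P_cyl_top [ProbabilityTheory.IsMarkovKernel P] (hP : IsPCAB β 0 k P) (η : Conf 2)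
    (T : Finset (Site 2)) :
    P η (cylB T (fun _ => true)) = ENNReal.ofReal (qfun β k T η) := by
  rw [hP η T (fun _ => true),
    show qfun β k T η = ∏ j : ↥T, pval β 0 k j.1 true η from
      (Finset.prod_coe_sort T (fun j => pval β 0 k j true η)).symm,
    ENNReal.ofReal_prod_of_nonneg (fun j _ => (pval_bounds j.1 true η).1)]

lemma bind_cyl_top [ProbabilityTheory.IsMarkovKernel P] (hP : IsPCAB β 0 k P)
    (μ : Measure (Conf 2)) (T : Finset (Site 2)) :
    (μ.bind ⇑P) (cylB T (fun _ => true)) = ∫⁻ η, ENNReal.ofReal (qfun β k T η) ∂μ := by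
  rw [Measure.bind_apply (measurableSet_cylB _ _) P.measurable.aemeasurable]
  exact MeasureTheory.lintegral_congr fun η => P_cyl_top hP η T

lemma stationary_cyl [ProbabilityTheory.IsMarkovKernel P] (hP : IsPCAB β 0 k P)
    (hrange : ∀ i : Site 2, (1 : ℝ) < (normSq i : ℝ) → k i = 0)
    (μ : Measure (Conf 2)) [IsProbabilityMeasure μ] (hμ : μ.bind ⇑P = μ)
    (T : Finset (Site 2)) :
    μ (cylB T (fun _ => true)) = ENNReal.ofReal (∫ η, qfun β k T η ∂μ) := by
  conv_lhs => rw [← hμ]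
  rw [bind_cyl_top hP μ T, ← MeasureTheory.ofReal_integral_eq_lintegral_ofReal
    (integrable_bdd (measurable_qfun hrange T) 1
      (fun σ => by rw [abs_of_nonneg (qfun_nonneg T σ)]; exact qfun_le_one T σ) μ)
    (Filter.Eventually.of_forall (qfun_nonneg T))]

lemma P_flip [ProbabilityTheory.IsMarkovKernel P] (hP : IsPCAB β 0 k P) (η : Conf 2) :
    P (flipC η) = Measure.map flipC (P η) := by
  refine ext_of_generate_finite cylSets generateFrom_cylSets isPiSystem_cylSets ?_ ?_
  · rintro s ⟨Λ, a, rfl⟩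
    rw [Measure.map_apply measurable_flipC (measurableSet_cylB _ _), flip_preimage_cyl,
      hP (flipC η) Λ a, hP η Λ (fun j => !(a j))]
    exact Finset.prod_congr rfl fun j _ => by rw [pval_flip]
  · rw [Measure.map_apply measurable_flipC MeasurableSet.univ, Set.preimage_univ,
      measure_univ, measure_univ]

lemma bind_flip [ProbabilityTheory.IsMarkovKernel P] (hP : IsPCAB β 0 k P)
    (μ : Measure (Conf 2)) :
    (Measure.map flipC μ).bind ⇑P = Measure.map flipC (μ.bind ⇑P) := by
  ext s hs
  rw [Measure.bind_apply hs P.measurable.aemeasurable,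
    MeasureTheory.lintegral_map (P.measurable_coe hs) measurable_flipC,
    Measure.map_apply measurable_flipC hs,
    Measure.bind_apply (measurable_flipC hs) P.measurable.aemeasurable]
  exact MeasureTheory.lintegral_congr fun η => by
    rw [P_flip hP η, Measure.map_apply measurable_flipC hs]

/-- (`d = 2`, `h = 0`, range-one `k` with `k(0) ≤ 0`, `k(e₁) < 0`,
`k(e₂) < 0`.) If the Gibbs measures `μ⁺` and `μ⁻`, obtained as weak limits of the finite
volume Gibbs measures with `+`, resp. `-`, boundary conditions, are different, then `μ⁺`
is not stationary for the infinite volume PCA `P`. -/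
theorem stmt17 (β : ℝ) (hβ : 0 < β)
    (k : Site 2 → ℝ) (hsym : ∀ i : Site 2, k (-i) = k i)
    (hrange : ∀ i : Site 2, (1 : ℝ) < (normSq i : ℝ) → k i = 0)
    (hk0 : k 0 ≤ 0) (hk1 : k e1 < 0) (hk2 : k e2 < 0)
    (P : ProbabilityTheory.Kernel (Conf 2) (Conf 2)) [ProbabilityTheory.IsMarkovKernel P]
    (hP : IsPCAB β 0 k P)
    (μp μm : Measure (Conf 2)) [IsProbabilityMeasure μp] [IsProbabilityMeasure μm]
    (φp : ℕ → ℕ) (hφp : StrictMono φp)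
    (hlimp : ∀ f : Conf 2 → ℝ, LocalFun f →
      Tendsto (fun n => ∫ σ, f σ ∂(gibbsMeas β k (boxCc (φp n)) fun _ => true)) atTop
        (nhds (∫ σ, f σ ∂μp)))
    (φm : ℕ → ℕ) (hφm : StrictMono φm)
    (hlimm : ∀ f : Conf 2 → ℝ, LocalFun f →
      Tendsto (fun n => ∫ σ, f σ ∂(gibbsMeas β k (boxCc (φm n)) fun _ => false)) atTop
        (nhds (∫ σ, f σ ∂μm)))
    (hne : μp ≠ μm) :
    μp.bind ⇑P ≠ μp := by
  intro hstat
  apply hne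
  have hβ0 : (0:ℝ) ≤ β := hβ.le
  have hknp : ∀ x, k x ≤ 0 := k_nonpos hsym hrange hk0 hk1 hk2
  haveI hmapinst : IsProbabilityMeasure (Measure.map flipC μp) :=
    Measure.isProbabilityMeasure_map measurable_flipC.aemeasurable
  -- limits restated in terms of finite volume expectations
  have hlimpEx : ∀ (Δ : Finset (Site 2)) (G : Conf 2 → ℝ),
      (∀ σ σ' : Conf 2, (∀ j ∈ Δ, σ j = σ' j) → G σ = G σ') →
      Tendsto (fun n => Ex β k (boxCc (φp n)) (fun _ => true) G) atTop
        (nhds (∫ σ, G σ ∂μp)) := by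
    intro Δ G hloc
    exact (hlimp G ⟨Δ, hloc⟩).congr fun n => integral_gibbsMeas _ _ (measurable_local hloc)
  have hlimmEx : ∀ (Δ : Finset (Site 2)) (G : Conf 2 → ℝ),
      (∀ σ σ' : Conf 2, (∀ j ∈ Δ, σ j = σ' j) → G σ = G σ') →
      Tendsto (fun n => Ex β k (boxCc (φm n)) (fun _ => false) G) atTop
        (nhds (∫ σ, G σ ∂μm)) := by
    intro Δ G hloc
    exact (hlimm G ⟨Δ, hloc⟩).congr fun n => integral_gibbsMeas _ _ (measurable_local hloc)
  -- comparison of expectations of increasing local observables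
  have hcomp : ∀ (Δ : Finset (Site 2)) (G : Conf 2 → ℝ),
      (∀ σ σ' : Conf 2, (∀ j ∈ Δ, σ j = σ' j) → G σ = G σ') → (∀ σ, 0 ≤ G σ) →
      (∀ σ, G σ ≤ 1) → Monotone G → ∫ σ, G σ ∂μm ≤ ∫ σ, G σ ∂μp := by
    intro Δ G hloc hG0 hG1 hGm
    obtain ⟨N, hN⟩ := exists_boxCc Δ
    refine le_of_tendsto_of_tendsto (hlimmEx Δ G hloc) (hlimpEx Δ G hloc) ?_
    rw [Filter.EventuallyLE, eventually_atTop]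
    refine ⟨N, fun n hn => ?_⟩
    have hmn : Δ ⊆ boxCc (φm n) := hN.trans (boxCc_mono (le_trans hn hφm.le_apply))
    have hpn : Δ ⊆ boxCc (φp n) := hN.trans (boxCc_mono (le_trans hn hφp.le_apply))
    have hMm : boxCc (φm n) ⊆ boxCc (max (φp n) (φm n)) := boxCc_mono (le_max_right _ _)
    have hMp : boxCc (φp n) ⊆ boxCc (max (φp n) (φm n)) := boxCc_mono (le_max_left _ _)
    calc Ex β k (boxCc (φm n)) (fun _ => false) G
        ≤ Ex β k (boxCc (max (φp n) (φm n))) (fun _ => false) G :=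
          M2bot hβ0 hrange hknp hmn hMm hG0 hG1 hGm hloc
      _ ≤ Ex β k (boxCc (max (φp n) (φm n))) (fun _ => true) G :=
          M1Ex hβ0 hrange hknp (hmn.trans hMm) (fun j => Bool.false_le _) hG0 hGm hloc
      _ ≤ Ex β k (boxCc (φp n)) (fun _ => true) G :=
          M2top hβ0 hrange hknp hpn hMp hG0 hGm hloc
  -- `μ⁻` is the global spin flip of `μ⁺`
  have hμm : μm = Measure.map flipC μp := by
    refine measure_eq_of_mono μm (Measure.map flipC μp) fun T => ?_
    rw [MeasureTheory.integral_map measurable_flipC.aemeasurable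
      (measurable_monoF T).aestronglyMeasurable]
    obtain ⟨N, hN⟩ := exists_boxCc T
    have humono : ∀ m n', N ≤ m → m ≤ n' →
        Ex β k (boxCc m) (fun _ => false) (monoF T)
          ≤ Ex β k (boxCc n') (fun _ => false) (monoF T) :=
      fun m n' hm hmn' => M2bot hβ0 hrange hknp (hN.trans (boxCc_mono hm)) (boxCc_mono hmn')
        (monoF_nonneg T) (monoF_le_one T) (monoF_mono T) (monoF_local T)
    have hlocflip : ∀ σ σ' : Conf 2, (∀ j ∈ T, σ j = σ' j) →
        monoF T (flipC σ) = monoF T (flipC σ') :=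
      fun σ σ' h => monoF_local T _ _ (fun j hj => by unfold flipC; rw [h j hj])
    have hx := hlimmEx T (monoF T) (monoF_local T)
    have hy0 := hlimpEx T (fun σ => monoF T (flipC σ)) hlocflip
    have hflipEq : ∀ Λ : Finset (Site 2),
        Ex β k Λ (fun _ => true) (fun σ => monoF T (flipC σ))
          = Ex β k Λ (fun _ => false) (monoF T) := by
      intro Λ
      rw [show (fun _ => false : Conf 2) = flipC (fun _ => true) from rfl, Ex_flip]
    have hy : Tendsto (fun n => Ex β k (boxCc (φp n)) (fun _ => false) (monoF T)) atTop
        (nhds (∫ σ, monoF T (flipC σ) ∂μp)) :=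
      hy0.congr fun n => hflipEq _
    exact subseq_limit_eq humono hφm hφp hx hy
  -- `μ⁻` is stationary as well
  have hstatm : μm.bind ⇑P = μm := by
    rw [hμm, bind_flip hP μp, hstat]
  -- conclude that all monomial moments agree
  refine measure_eq_of_mono μp μm fun T => ?_
  have hqInt : ∀ (ν : Measure (Conf 2)) [IsProbabilityMeasure ν], Integrable (qfun β k T) ν :=
    fun ν _ => integrable_bdd (measurable_qfun hrange T) 1
      (fun σ => by rw [abs_of_nonneg (qfun_nonneg T σ)]; exact qfun_le_one T σ) ν
  have h1 : ∫ σ, monoF T σ ∂μm ≤ ∫ σ, monoF T σ ∂μp :=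
    hcomp T (monoF T) (monoF_local T) (monoF_nonneg T) (monoF_le_one T) (monoF_mono T)
  have h2 : ∫ η, qfun β k T η ∂μp ≤ ∫ η, qfun β k T η ∂μm := by
    have h3 := hcomp (T.biUnion nbF) (fun σ => 1 - qfun β k T σ)
      (fun σ σ' h => by
        show 1 - qfun β k T σ = 1 - qfun β k T σ'
        rw [qfun_local hrange T σ σ' h])
      (fun σ => by
        show (0:ℝ) ≤ 1 - qfun β k T σ
        have := qfun_le_one (β := β) (k := k) T σ
        linarith)
      (fun σ => by
        show 1 - qfun β k T σ ≤ 1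
        have := qfun_nonneg (β := β) (k := k) T σ
        linarith)
      (fun σ σ' h => by
        show 1 - qfun β k T σ ≤ 1 - qfun β k T σ'
        have := qfun_anti hβ0 hrange hknp T h
        linarith)
    rw [MeasureTheory.integral_sub (integrable_const 1) (hqInt μm),
      MeasureTheory.integral_sub (integrable_const 1) (hqInt μp)] at h3
    simp only [MeasureTheory.integral_const, measure_univ, ENNReal.toReal_one, probReal_univ,
      smul_eq_mul, mul_one] at h3
    linarith
  have hpc := stationary_cyl hP hrange μp hstat T
  have hmc := stationary_cyl hP hrange μm hstatm T
  have h1' : ∫ η, qfun β k T η ∂μm ≤ ∫ η, qfun β k T η ∂μp := by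
    rw [integral_monoF μp T, integral_monoF μm T, hpc, hmc,
      ENNReal.toReal_ofReal (MeasureTheory.integral_nonneg (qfun_nonneg T)),
      ENNReal.toReal_ofReal (MeasureTheory.integral_nonneg (qfun_nonneg T))] at h1
    exact h1
  rw [integral_monoF μp T, integral_monoF μm T, hpc, hmc,
    ENNReal.toReal_ofReal (MeasureTheory.integral_nonneg (qfun_nonneg T)),
    ENNReal.toReal_ofReal (MeasureTheory.integral_nonneg (qfun_nonneg T))]
  linarith

end
end PCA
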